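/- Let μ:[0,1]→P(X) be a constant speed geodesic in (P(X),W_ψ) and let η ∈ P(C([0,1];X)) represent μ in the sense of the superposition theorem (η concentrated on AC^ψ curves, (e_t)_#η=μ_t, and |μ'|(t)=‖|u'|(t)‖_{L^ψ_η} a.e.). Then γ_{s,t}:=(e_s,e_t)_#η is an optimal plan for W_ψ(μ_s,μ_t) for every s,t ∈ [0,1]. -/

import Mathlib

open MeasureTheory Filter Set ENNReal NNReal Topology

noncomputable section

/-- Luxemburg (Orlicz) norm of a nonnegative function. -/
def luxNorm (ψ : ℝ≥0∞ → ℝ≥0∞) {Ω : Type*} [MeasurableSpace Ω]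
    (ν : Measure Ω) (u : Ω → ℝ≥0∞) : ℝ≥0∞ :=
  sInf {l : ℝ≥0∞ | 0 < l ∧ ∫⁻ x, ψ (u x / l) ∂ν ≤ 1}

/-- Standard assumptions on the Orlicz function `ψ`: convex, lower semicontinuous,
non-decreasing, `ψ 0 = 0`, `ψ x → ∞` as `x → ∞`. -/
structure IsOrlicz (ψ : ℝ≥0∞ → ℝ≥0∞) : Prop where
  convex : ∀ a b x y : ℝ≥0∞, a + b = 1 → ψ (a * x + b * y) ≤ a * ψ x + b * ψ y
  lsc : LowerSemicontinuous ψ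
  mono : Monotone ψ
  zero : ψ 0 = 0
  tendsto_top : ∀ C : ℝ≥0∞, ∃ M : ℝ≥0∞, ∀ x, M ≤ x → C ≤ ψ x

/-- Superlinearity at infinity: `ψ x / x → ∞`. -/
def Superlinear (ψ : ℝ≥0∞ → ℝ≥0∞) : Prop :=
  ∀ C : ℝ≥0, ∃ M : ℝ≥0, ∀ x : ℝ≥0, M ≤ x → (C : ℝ≥0∞) * x ≤ ψ x

/-- Null right derivative at `0`: `ψ x / x → 0` as `x → 0⁺`. -/
def FlatAtZero (ψ : ℝ≥0∞ → ℝ≥0∞) : Prop :=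
  ∀ ε : ℝ≥0, 0 < ε → ∃ δ : ℝ≥0, 0 < δ ∧ ∀ x : ℝ≥0, 0 < x → x ≤ δ → ψ x ≤ (ε : ℝ≥0∞) * x

/-- Legendre conjugate `ψ*(y) = sup_{x ≥ 0} (x y - ψ x)`. -/
def conjOrlicz (ψ : ℝ≥0∞ → ℝ≥0∞) (y : ℝ≥0∞) : ℝ≥0∞ :=
  ⨆ x : ℝ≥0, (x : ℝ≥0∞) * y - ψ x

/-- Generalized inverse of `ψ` (with the convention of the paper). -/
def psiInv (ψ : ℝ≥0∞ → ℝ≥0∞) (s : ℝ≥0∞) : ℝ≥0∞ :=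
  sSup {r : ℝ≥0∞ | ψ r ≤ s}

/-- `(X, τ, d)` is an extended Polish space: `d` is an extended distance, complete,
`d`-convergence implies `τ`-convergence, and `d` is `τ × τ` lower semicontinuous. -/
structure IsExtPolish (X : Type*) [TopologicalSpace X] (d : X → X → ℝ≥0∞) : Prop where
  symm : ∀ x y, d x y = d y x
  eq_zero_iff : ∀ x y, d x y = 0 ↔ x = y
  triangle : ∀ x y z, d x z ≤ d x y + d y z
  complete : ∀ u : ℕ → X,
    (∀ ε : ℝ≥0∞, 0 < ε → ∃ N, ∀ m n, N ≤ m → N ≤ n → d (u m) (u n) < ε) →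
    ∃ x, Tendsto (fun n => d (u n) x) atTop (𝓝 0)
  compat : ∀ (u : ℕ → X) (x : X),
    Tendsto (fun n => d (u n) x) atTop (𝓝 0) → Tendsto u atTop (𝓝 x)
  lsc : LowerSemicontinuous fun p : X × X => d p.1 p.2

/-- Admissible transport plans between `μ` and `ν`. -/
def Couplings {X : Type*} [MeasurableSpace X] (μ ν : Measure X) : Set (Measure (X × X)) :=
  {γ | IsProbabilityMeasure γ ∧ γ.map Prod.fst = μ ∧ γ.map Prod.snd = ν}

/-- The Wasserstein–Orlicz extended distance. -/
def Wass (ψ : ℝ≥0∞ → ℝ≥0∞) {X : Type*} [MeasurableSpace X] (d : X → X → ℝ≥0∞)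
    (μ ν : Measure X) : ℝ≥0∞ :=
  ⨅ γ ∈ Couplings μ ν, luxNorm ψ γ (fun p : X × X => d p.1 p.2)

/-- Absolutely continuous curve with finite `L^ψ` energy with respect to the
extended distance `ρ`, on the interval `[a, b]`. -/
def IsACpsi (ψ : ℝ≥0∞ → ℝ≥0∞) {A : Type*} (ρ : A → A → ℝ≥0∞)
    (a b : ℝ) (u : ℝ → A) : Prop :=
  ∃ m : ℝ → ℝ≥0∞, luxNorm ψ (volume.restrict (Set.Icc a b)) m < ⊤ ∧
    ∀ s t : ℝ, a ≤ s → s ≤ t → t ≤ b → ρ (u s) (u t) ≤ ∫⁻ r in Set.Icc s t, m r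

/-- The metric derivative of the curve `u` (with values in a space with extended
distance `ρ`) at time `t` within the interval `I` equals `L`. -/
def HasMDeriv {A : Type*} (ρ : A → A → ℝ≥0∞) (u : ℝ → A) (I : Set ℝ) (t : ℝ)
    (L : ℝ≥0∞) : Prop :=
  Tendsto (fun h : ℝ => ρ (u (t + h)) (u t) / ENNReal.ofReal |h|)
    (𝓝[{h : ℝ | h ≠ 0 ∧ t + h ∈ I}] 0) (𝓝 L)

/-- The support of a Borel measure. -/
def measSupport {Y : Type*} [TopologicalSpace Y] [MeasurableSpace Y] (μ : Measure Y) : Set Y :=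
  {y | ∀ U ∈ 𝓝 y, 0 < μ U}

/-! ### Auxiliary lemmas -/

section OrliczFacts

variable {ψ : ℝ≥0∞ → ℝ≥0∞}

lemma IsOrlicz.measurable (hψ : IsOrlicz ψ) : Measurable ψ :=
  hψ.mono.measurable

lemma IsOrlicz.top (hψ : IsOrlicz ψ) : ψ ⊤ = ⊤ := by
  rw [eq_top_iff]
  refine le_of_forall_le ?_
  intro C _
  obtain ⟨M, hM⟩ := hψ.tendsto_top C
  exact hM ⊤ le_top

/-- `ψ` commutes with suprema of monotone sequences. -/
lemma IsOrlicz.iSup_seq (hψ : IsOrlicz ψ) (x : ℕ → ℝ≥0∞) (hx : Monotone x) :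
    ψ (⨆ n, x n) = ⨆ n, ψ (x n) := by
  refine le_antisymm ?_ (iSup_le fun n => hψ.mono (le_iSup _ n))
  by_contra hlt
  push_neg at hlt
  set y := ⨆ n, ψ (x n) with hy
  have h1 : Tendsto x atTop (𝓝 (⨆ n, x n)) := tendsto_atTop_iSup hx
  have h2 := hψ.lsc (⨆ n, x n) y hlt
  have h3 := h1.eventually h2
  obtain ⟨n, hn⟩ := h3.exists
  exact absurd (le_iSup (fun n => ψ (x n)) n) (not_le.mpr hn)

/-- Finite Jensen inequality from two-point convexity. -/
lemma IsOrlicz.finJensen (hψ : IsOrlicz ψ) {ι : Type*} (F : Finset ι)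
    (w x : ι → ℝ≥0∞) (hw : ∑ i ∈ F, w i = 1) :
    ψ (∑ i ∈ F, w i * x i) ≤ ∑ i ∈ F, w i * ψ (x i) := by
  classical
  induction F using Finset.cons_induction generalizing w x with
  | empty => simp at hw
  | cons a F ha IH =>
    rw [Finset.sum_cons] at hw ⊢
    rw [Finset.sum_cons]
    by_cases hb : ∑ i ∈ F, w i = 0
    · have hwa : w a = 1 := by rw [hb, add_zero] at hw; exact hw
      have hz : ∀ i ∈ F, w i = 0 := by
        intro i hi
        exact (Finset.sum_eq_zero_iff.mp hb) i hi
      have h1 : ∑ i ∈ F, w i * x i = 0 := Finset.sum_eq_zero fun i hi => by rw [hz i hi, zero_mul]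
      have h2 : ∑ i ∈ F, w i * ψ (x i) = 0 := Finset.sum_eq_zero fun i hi => by
        rw [hz i hi, zero_mul]
      rw [h1, h2, hwa, one_mul, one_mul, add_zero, add_zero]
    · set b := ∑ i ∈ F, w i with hbdef
      have hble : b ≤ 1 := by rw [← hw]; exact le_add_self
      have hbt : b ≠ ⊤ := ne_top_of_le_ne_top one_ne_top hble
      have hinv : b * b⁻¹ = 1 := ENNReal.mul_inv_cancel hb hbt
      have hw' : ∑ i ∈ F, (fun i => w i * b⁻¹) i = 1 := by
        simp only [← Finset.sum_mul, ← hbdef, hinv]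
      have key : ∑ i ∈ F, w i * x i = b * ∑ i ∈ F, (w i * b⁻¹) * x i := by
        rw [Finset.mul_sum]
        refine Finset.sum_congr rfl fun i hi => ?_
        rw [← mul_assoc, ← mul_assoc, mul_comm b (w i), mul_assoc (w i) b b⁻¹, hinv, mul_one]
      have hconv := hψ.convex (w a) b (x a) (∑ i ∈ F, (w i * b⁻¹) * x i) hw
      rw [key]
      refine le_trans hconv ?_
      gcongr
      refine le_trans (mul_le_mul_right (IH (fun i => w i * b⁻¹) x hw') b) ?_
      rw [Finset.mul_sum]
      refine le_of_eq (Finset.sum_congr rfl fun i hi => ?_)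
      rw [← mul_assoc, ← mul_assoc, mul_comm b (w i), mul_assoc (w i) b b⁻¹, hinv, mul_one]

/-- Jensen's inequality for `ψ` and a probability measure. -/
lemma IsOrlicz.jensen (hψ : IsOrlicz ψ) {Ω : Type*} [MeasurableSpace Ω]
    (ν : Measure Ω) [IsProbabilityMeasure ν] {f : Ω → ℝ≥0∞} (hf : Measurable f) :
    ψ (∫⁻ x, f x ∂ν) ≤ ∫⁻ x, ψ (f x) ∂ν := by
  have hmono : Monotone fun n => (SimpleFunc.eapprox f n).lintegral ν := fun i j hij =>
    SimpleFunc.lintegral_mono (SimpleFunc.monotone_eapprox f hij) le_rfl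
  rw [lintegral_eq_iSup_eapprox_lintegral hf, hψ.iSup_seq _ hmono]
  refine iSup_le fun n => ?_
  set g := SimpleFunc.eapprox f n with hg
  have hsum : ∑ y ∈ g.range, ν (⇑g ⁻¹' {y}) = 1 := by
    rw [SimpleFunc.sum_measure_preimage_singleton]
    have huniv : ⇑g ⁻¹' ↑g.range = Set.univ := by
      ext a; simp [SimpleFunc.mem_range_self]
    rw [huniv, measure_univ]
  have h1 : g.lintegral ν = ∑ y ∈ g.range, ν (⇑g ⁻¹' {y}) * id y := by
    simp only [SimpleFunc.lintegral, id_eq]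
    exact Finset.sum_congr rfl fun y _ => mul_comm _ _
  have h2 := hψ.finJensen g.range (fun y => ν (⇑g ⁻¹' {y})) id hsum
  rw [h1]
  refine le_trans h2 ?_
  have h3 : ∑ y ∈ g.range, ν (⇑g ⁻¹' {y}) * ψ (id y) = (g.map ψ).lintegral ν := by
    rw [SimpleFunc.map_lintegral]
    exact Finset.sum_congr rfl fun y _ => mul_comm _ _
  rw [h3, ← SimpleFunc.lintegral_eq_lintegral]
  refine lintegral_mono fun a => ?_
  simp only [SimpleFunc.coe_map, Function.comp_apply]
  refine hψ.mono ?_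
  calc g a ≤ ⨆ k, (SimpleFunc.eapprox f k) a := le_iSup (fun k => SimpleFunc.eapprox f k a) n
  _ = f a := SimpleFunc.iSup_eapprox_apply hf a

end OrliczFacts

section LuxFacts

variable {ψ : ℝ≥0∞ → ℝ≥0∞} {Ω : Type*} [MeasurableSpace Ω] {ν : Measure Ω}

lemma luxNorm_congr_ae {u v : Ω → ℝ≥0∞} (h : u =ᶠ[ae ν] v) :
    luxNorm ψ ν u = luxNorm ψ ν v := by
  unfold luxNorm
  congr 1
  refine Set.ext fun l => ?_
  simp only [Set.mem_setOf_eq]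
  rw [lintegral_congr_ae (g := fun x => ψ (v x / l)) (h.mono fun x hx => by simp only [hx])]

lemma modular_le_of_lt_luxNorm (hψ : IsOrlicz ψ) {u : Ω → ℝ≥0∞} {c : ℝ≥0∞}
    (hc : luxNorm ψ ν u < c) : ∫⁻ x, ψ (u x / c) ∂ν ≤ 1 := by
  obtain ⟨l, hl, hlc⟩ := sInf_lt_iff.mp hc
  refine le_trans (lintegral_mono fun x => hψ.mono ?_) hl.2
  exact ENNReal.div_le_div_left hlc.le _

lemma luxNorm_le {u : Ω → ℝ≥0∞} {c : ℝ≥0∞} (hc : 0 < c)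
    (h : ∫⁻ x, ψ (u x / c) ∂ν ≤ 1) : luxNorm ψ ν u ≤ c :=
  sInf_le ⟨hc, h⟩

lemma luxNorm_zero_fun (hψ : IsOrlicz ψ) : luxNorm ψ ν (fun _ => (0 : ℝ≥0∞)) = 0 := by
  refine le_antisymm ?_ (zero_le)
  refine ENNReal.le_of_forall_pos_le_add fun ε hε _ => ?_
  rw [zero_add]
  refine sInf_le ⟨ENNReal.coe_pos.mpr hε, ?_⟩
  simp [ENNReal.zero_div, hψ.zero]

end LuxFacts

section Discretization

/-- Dyadic-type upper approximation of a real number, taking countably many values. -/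
def qk (k : ℕ) (r : ℝ) : ℝ := min 1 ((⌈r * (k + 1 : ℝ)⌉ : ℝ) / (k + 1 : ℝ))

lemma qk_monotone (k : ℕ) : Monotone (qk k) := by
  intro a b hab
  have hk : (0:ℝ) < k + 1 := by positivity
  have h1 : a * (k + 1 : ℝ) ≤ b * (k + 1 : ℝ) := by nlinarith
  have h3 : ((⌈a * (k + 1 : ℝ)⌉ : ℤ) : ℝ) ≤ ((⌈b * (k + 1 : ℝ)⌉ : ℤ) : ℝ) := by
    exact_mod_cast Int.ceil_le_ceil h1
  exact min_le_min le_rfl (by gcongr)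

lemma qk_ge (k : ℕ) {r : ℝ} (hr : r ≤ 1) : r ≤ qk k r := by
  refine le_min hr ?_
  rw [le_div_iff₀ (by positivity)]
  exact Int.le_ceil _

lemma qk_le_one (k : ℕ) (r : ℝ) : qk k r ≤ 1 := min_le_left _ _

lemma qk_le (k : ℕ) (r : ℝ) : qk k r ≤ min 1 (r + 1 / (k + 1 : ℝ)) := by
  refine min_le_min le_rfl ?_
  rw [div_le_iff₀ (by positivity)]
  have h1 := Int.ceil_lt_add_one (r * (k + 1 : ℝ))
  have hk : (0:ℝ) < k + 1 := by positivity
  have h2 : (1 / (k + 1 : ℝ)) * (k + 1 : ℝ) = 1 := by field_simp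
  nlinarith

lemma qk_measurable (k : ℕ) : Measurable (qk k) := (qk_monotone k).measurable

lemma qk_range_countable (k : ℕ) : (Set.range (qk k)).Countable := by
  have : Set.range (qk k) ⊆ Set.range (fun z : ℤ => min 1 ((z : ℝ) / (k + 1 : ℝ))) := by
    rintro x ⟨r, rfl⟩
    exact ⟨⌈r * (k + 1 : ℝ)⌉, rfl⟩
  exact (Set.countable_range _).mono this

variable {X : Type*} [TopologicalSpace X] [PolishSpace X] [MeasurableSpace X] [BorelSpace X]

lemma measurable_eval_comp {g : ℝ → ℝ} (hg : Measurable g) (hc : (Set.range g).Countable) :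
    Measurable (fun p : (ℝ → X) × ℝ => p.1 (g p.2)) := by
  intro A hA
  have hset : (fun p : (ℝ → X) × ℝ => p.1 (g p.2)) ⁻¹' A =
      ⋃ q ∈ Set.range g, ({f : ℝ → X | f q ∈ A} ×ˢ (g ⁻¹' {q})) := by
    ext ⟨f, r⟩
    simp only [Set.mem_preimage, Set.mem_iUnion, Set.mem_prod, Set.mem_setOf_eq,
      Set.mem_singleton_iff, Set.mem_range]
    constructor
    · intro h
      exact ⟨g r, ⟨r, rfl⟩, h, rfl⟩
    · rintro ⟨q, _, h1, rfl⟩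
      exact h1
  rw [hset]
  refine MeasurableSet.biUnion hc fun q _ => ?_
  exact (measurable_pi_apply q hA).prod (hg (measurableSet_singleton q))

/-- Evaluation of a path at the discretized time. -/
def evalQ (k : ℕ) : (ℝ → X) × ℝ → X := fun p => p.1 (qk k p.2)

lemma measurable_evalQ (k : ℕ) : Measurable (evalQ (X := X) k) :=
  measurable_eval_comp (qk_measurable k) (qk_range_countable k)

variable (d : X → X → ℝ≥0∞)

/-- Discretized increment of the curve over a time step `1/(n+1)`. -/
def dq (n k : ℕ) : (ℝ → X) × ℝ → ℝ≥0∞ := fun p =>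
  d (evalQ k p) (evalQ k (p.1, p.2 + 1 / (n + 1 : ℝ)))

/-- Measurable version of the increment `d (u r) (u (r + 1/(n+1)))`. -/
def PhiN (n : ℕ) (p : (ℝ → X) × ℝ) : ℝ≥0∞ := liminf (fun k => dq d n k p) atTop

/-- Measurable version of the metric derivative of the curve. -/
def Phi (p : (ℝ → X) × ℝ) : ℝ≥0∞ :=
  liminf (fun n => PhiN d n p * ((n : ℝ≥0∞) + 1)) atTop

variable {d} (hd : Measurable (fun p : X × X => d p.1 p.2))

include hd in
lemma measurable_dq (n k : ℕ) : Measurable (dq d n k) := by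
  refine hd.comp (Measurable.prodMk (measurable_evalQ k) ?_)
  exact (measurable_evalQ k).comp (measurable_fst.prodMk (measurable_snd.add_const _))

include hd in
lemma measurable_PhiN (n : ℕ) : Measurable (PhiN d n) :=
  Measurable.liminf fun k => measurable_dq hd n k

include hd in
lemma measurable_Phi : Measurable (Phi d) :=
  Measurable.liminf fun n => (measurable_PhiN hd n).mul_const _

end Discretization

section Majorant

variable {X : Type*} [TopologicalSpace X] [PolishSpace X] [MeasurableSpace X] [BorelSpace X]
variable {d : X → X → ℝ≥0∞} {ψ : ℝ≥0∞ → ℝ≥0∞}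

/-- From an `AC^ψ` curve one can extract a *measurable* majorant with finite integral. -/
lemma exists_measurable_majorant (hψ : IsOrlicz ψ) (hsl : Superlinear ψ) {u : ℝ → X}
    (hu : IsACpsi ψ d 0 1 u) :
    ∃ mh : ℝ → ℝ≥0∞, Measurable mh ∧ (∫⁻ r, mh r) < ⊤ ∧
      ∀ a b : ℝ, 0 ≤ a → a ≤ b → b ≤ 1 → d (u a) (u b) ≤ ∫⁻ r in Set.Icc a b, mh r := by
  obtain ⟨m, hlux, hmaj⟩ := hu
  set μ0 : Measure ℝ := volume.restrict (Set.Icc (0:ℝ) 1) with hμ0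
  obtain ⟨l, hl, hlt⟩ := sInf_lt_iff.mp hlux
  obtain ⟨hl0, hlint⟩ := hl
  have hlt' : l ≠ ⊤ := hlt.ne
  obtain ⟨M₁, hM₁⟩ := hsl 1
  have hpt : ∀ r, m r ≤ l * ((M₁ : ℝ≥0∞) + ψ (m r / l)) := by
    intro r
    have h0 : m r = l * (m r / l) := (ENNReal.mul_div_cancel hl0.ne' hlt').symm
    nth_rewrite 1 [h0]
    refine mul_le_mul_right ?_ l
    rcases le_or_gt (m r / l) (M₁ : ℝ≥0∞) with h | h
    · exact le_trans h le_self_add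
    · rcases eq_or_ne (m r / l) ⊤ with htop | htop
      · rw [htop, hψ.top]; exact le_top
      · set y := (m r / l).toNNReal with hy
        have hcoe : (y : ℝ≥0∞) = m r / l := ENNReal.coe_toNNReal htop
        have hMy : M₁ ≤ y := by
          rw [← ENNReal.coe_le_coe, hcoe]; exact h.le
        have hyy := hM₁ y hMy
        calc m r / l = (y : ℝ≥0∞) := hcoe.symm
        _ ≤ ψ (y : ℝ≥0∞) := by simpa using hyy
        _ = ψ (m r / l) := by rw [hcoe]
        _ ≤ (M₁ : ℝ≥0∞) + ψ (m r / l) := le_add_self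
  have hμ0univ : μ0 Set.univ ≤ 1 := by
    rw [hμ0, Measure.restrict_apply_univ, Real.volume_Icc]
    simp
  have hint : ∫⁻ r, m r ∂μ0 < ⊤ := by
    calc ∫⁻ r, m r ∂μ0 ≤ ∫⁻ r, l * ((M₁ : ℝ≥0∞) + ψ (m r / l)) ∂μ0 := lintegral_mono hpt
    _ = l * ∫⁻ r, ((M₁ : ℝ≥0∞) + ψ (m r / l)) ∂μ0 := lintegral_const_mul' _ _ hlt'
    _ = l * ((M₁ : ℝ≥0∞) * μ0 Set.univ + ∫⁻ r, ψ (m r / l) ∂μ0) := by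
        rw [lintegral_add_left measurable_const, lintegral_const]
    _ ≤ l * ((M₁ : ℝ≥0∞) * 1 + 1) := by gcongr
    _ < ⊤ := ENNReal.mul_lt_top hlt (by finiteness)
  have hadd : ∀ ⦃S : ℕ → Set ℝ⦄, (∀ i, MeasurableSet (S i)) → Pairwise (Function.onFun Disjoint S) →
      ∫⁻ r in (⋃ i, S i), m r ∂μ0 = ∑' i, ∫⁻ r in S i, m r ∂μ0 := by
    intro S hS hdisj
    rw [Measure.restrict_iUnion hdisj hS, lintegral_sum_measure]
  set μm : Measure ℝ := Measure.ofMeasurable (fun S _ => ∫⁻ r in S, m r ∂μ0)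
    (by simp) (fun S hS hd => hadd hS hd) with hμm
  have hμm_apply : ∀ S : Set ℝ, MeasurableSet S → μm S = ∫⁻ r in S, m r ∂μ0 :=
    fun S hS => Measure.ofMeasurable_apply S hS
  have hμmuniv : μm Set.univ < ⊤ := by
    rw [hμm_apply _ MeasurableSet.univ, Measure.restrict_univ]; exact hint
  haveI hfinμm : IsFiniteMeasure μm := ⟨hμmuniv⟩
  have hac : μm ≪ volume := by
    refine Measure.AbsolutelyContinuous.mk fun S hS h0 => ?_
    rw [hμm_apply S hS]
    have hz : μ0.restrict S = 0 := by
      rw [hμ0, Measure.restrict_restrict hS, Measure.restrict_eq_zero]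
      exact measure_mono_null Set.inter_subset_left h0
    rw [show μ0.restrict S = 0 from hz, lintegral_zero_measure]
  have h1 : volume.withDensity (μm.rnDeriv volume) = μm :=
    Measure.withDensity_rnDeriv_eq _ _ hac
  refine ⟨μm.rnDeriv volume, Measure.measurable_rnDeriv _ _, ?_, ?_⟩
  · have h2 : ∫⁻ r, μm.rnDeriv volume r = (volume.withDensity (μm.rnDeriv volume)) Set.univ := by
      rw [withDensity_apply _ MeasurableSet.univ, Measure.restrict_univ]
    rw [h2, h1]
    exact hμmuniv
  · intro a b ha hab hb1
    have h2 : ∫⁻ r in Set.Icc a b, μm.rnDeriv volume r = μm (Set.Icc a b) := by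
      rw [← withDensity_apply _ measurableSet_Icc, h1]
    rw [h2, hμm_apply _ measurableSet_Icc]
    have h3 : μ0.restrict (Set.Icc a b) = volume.restrict (Set.Icc a b) := by
      rw [hμ0, Measure.restrict_restrict measurableSet_Icc, Set.inter_eq_left.mpr ?_]
      intro x hx
      exact ⟨le_trans ha hx.1, le_trans hx.2 hb1⟩
    calc d (u a) (u b) ≤ ∫⁻ r in Set.Icc a b, m r := hmaj a b ha hab hb1
    _ = ∫⁻ r in Set.Icc a b, m r ∂μ0 := by rw [h3]

end Majorant

section FTC

variable {X : Type*} [TopologicalSpace X] [PolishSpace X] [MeasurableSpace X] [BorelSpace X]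
variable {d : X → X → ℝ≥0∞}

/-- The discretized increments converge to the true increments along `d`-absolutely
continuous curves. -/
lemma tendsto_dq (hX : IsExtPolish X d) {u : ℝ → X} {mh : ℝ → ℝ≥0∞}
    (hm : Measurable mh) (hfin : (∫⁻ r, mh r) < ⊤)
    (hmaj : ∀ a b : ℝ, 0 ≤ a → a ≤ b → b ≤ 1 → d (u a) (u b) ≤ ∫⁻ r in Set.Icc a b, mh r)
    {a b : ℝ} (ha : a ∈ Set.Icc (0:ℝ) 1) (hb : b ∈ Set.Icc (0:ℝ) 1) (hab : a ≤ b) :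
    Tendsto (fun k => d (u (qk k a)) (u (qk k b))) atTop (𝓝 (d (u a) (u b))) := by
  set ν := volume.withDensity mh with hν
  have hνIcc : ∀ x y : ℝ, ν (Set.Icc x y) = ∫⁻ r in Set.Icc x y, mh r :=
    fun x y => withDensity_apply _ measurableSet_Icc
  have hbound : ∀ x y : ℝ, 0 ≤ x → x ≤ y → y ≤ 1 → d (u x) (u y) ≤ ν (Set.Icc x y) := by
    intro x y h1 h2 h3; rw [hνIcc]; exact hmaj x y h1 h2 h3
  have hνuniv : ν Set.univ < ⊤ := by
    have : ν Set.univ = ∫⁻ r, mh r := by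
      rw [hν, withDensity_apply _ MeasurableSet.univ, Measure.restrict_univ]
    rw [this]; exact hfin
  have hshrink : ∀ x : ℝ, x ∈ Set.Icc (0:ℝ) 1 →
      Tendsto (fun k : ℕ => ν (Set.Icc x (min 1 (x + 1/(k+1:ℝ))))) atTop (𝓝 0) := by
    intro x hx
    have hmono : Antitone (fun k : ℕ => Set.Icc x (min 1 (x + 1/(k+1:ℝ)))) := by
      intro i j hij
      refine Set.Icc_subset_Icc le_rfl (min_le_min le_rfl ?_)
      have h1 : 1/(j+1:ℝ) ≤ 1/(i+1:ℝ) := by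
        gcongr

      linarith
    have hInter : (⋂ k : ℕ, Set.Icc x (min 1 (x + 1/(k+1:ℝ)))) = {x} := by
      ext y
      simp only [Set.mem_iInter, Set.mem_Icc, Set.mem_singleton_iff]
      constructor
      · intro h
        have h1 : x ≤ y := (h 0).1
        have h2 : y ≤ x := by
          by_contra hc
          push_neg at hc
          obtain ⟨k, hk⟩ := exists_nat_one_div_lt (sub_pos.mpr hc)
          have h3 := (h k).2
          have h4 := min_le_right (1:ℝ) (x + 1/(k+1:ℝ))
          have h5 : 1 / ((k:ℝ) + 1) = 1/(k+1:ℝ) := by norm_num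
          rw [h5] at hk
          linarith
        exact le_antisymm h2 h1
      · rintro rfl
        intro k
        have hp : (0:ℝ) < 1/(k+1:ℝ) := by positivity
        exact ⟨le_rfl, le_min hx.2 (by linarith)⟩
    have h0 : ν ({x} : Set ℝ) = 0 :=
      (withDensity_absolutelyContinuous volume mh) Real.volume_singleton
    have htmi := tendsto_measure_iInter_atTop (μ := ν)
      (fun k => measurableSet_Icc.nullMeasurableSet) hmono
      ⟨0, (lt_of_le_of_lt (measure_mono (Set.subset_univ _)) hνuniv).ne⟩
    rw [hInter, h0] at htmi
    exact htmi
  have hqa : ∀ x : ℝ, x ∈ Set.Icc (0:ℝ) 1 →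
      Tendsto (fun k => d (u x) (u (qk k x))) atTop (𝓝 0) := by
    intro x hx
    refine tendsto_of_tendsto_of_tendsto_of_le_of_le tendsto_const_nhds (hshrink x hx)
      (fun k => zero_le) (fun k => ?_)
    refine le_trans (hbound x (qk k x) hx.1 (qk_ge k hx.2) (qk_le_one k x)) ?_
    exact measure_mono (Set.Icc_subset_Icc le_rfl (qk_le k x))
  have hLne : d (u a) (u b) ≠ ⊤ :=
    ne_top_of_le_ne_top hνuniv.ne
      (le_trans (hbound a b ha.1 hab hb.2) (measure_mono (Set.subset_univ _)))
  rw [ENNReal.tendsto_nhds hLne]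
  intro ε hε
  have hε2 : (0:ℝ≥0∞) < ε/2 := ENNReal.half_pos hε.ne'
  have hA := (hqa a ha).eventually_lt_const hε2
  have hB := (hqa b hb).eventually_lt_const hε2
  filter_upwards [hA, hB] with k hka hkb
  have hsym1 : d (u (qk k a)) (u a) = d (u a) (u (qk k a)) := hX.symm _ _
  have hsym2 : d (u (qk k b)) (u b) = d (u b) (u (qk k b)) := hX.symm _ _
  constructor
  · -- lower bound
    have h1 : d (u a) (u b) ≤ d (u a) (u (qk k a)) +
        (d (u (qk k a)) (u (qk k b)) + d (u (qk k b)) (u b)) :=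
      le_trans (hX.triangle _ (u (qk k a)) _) (by
        exact add_le_add_right (hX.triangle _ (u (qk k b)) _) _)
    have h2 : d (u a) (u b) ≤ d (u (qk k a)) (u (qk k b)) + ε := by
      refine le_trans h1 ?_
      rw [hsym2]
      calc d (u a) (u (qk k a)) + (d (u (qk k a)) (u (qk k b)) + d (u b) (u (qk k b)))
          = d (u (qk k a)) (u (qk k b)) + (d (u a) (u (qk k a)) + d (u b) (u (qk k b))) := by ring
      _ ≤ d (u (qk k a)) (u (qk k b)) + (ε/2 + ε/2) := by
          gcongr
      _ = d (u (qk k a)) (u (qk k b)) + ε := by rw [ENNReal.add_halves]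
    exact tsub_le_iff_right.mpr h2
  · -- upper bound
    have h1 : d (u (qk k a)) (u (qk k b)) ≤ d (u (qk k a)) (u a) +
        (d (u a) (u b) + d (u b) (u (qk k b))) :=
      le_trans (hX.triangle _ (u a) _) (by
        exact add_le_add_right (hX.triangle _ (u b) _) _)
    refine le_trans h1 ?_
    rw [hsym1]
    calc d (u a) (u (qk k a)) + (d (u a) (u b) + d (u b) (u (qk k b)))
        = d (u a) (u b) + (d (u a) (u (qk k a)) + d (u b) (u (qk k b))) := by ring
    _ ≤ d (u a) (u b) + (ε/2 + ε/2) := by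
        gcongr
    _ = d (u a) (u b) + ε := by rw [ENNReal.add_halves]

lemma PhiN_eq (hX : IsExtPolish X d) {u : ℝ → X} {mh : ℝ → ℝ≥0∞}
    (hm : Measurable mh) (hfin : (∫⁻ r, mh r) < ⊤)
    (hmaj : ∀ a b : ℝ, 0 ≤ a → a ≤ b → b ≤ 1 → d (u a) (u b) ≤ ∫⁻ r in Set.Icc a b, mh r)
    {n : ℕ} {r : ℝ} (hr : 0 ≤ r) (hr2 : r + 1 / (n + 1 : ℝ) ≤ 1) :
    PhiN d n (u, r) = d (u r) (u (r + 1 / (n + 1 : ℝ))) := by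
  have hp : (0:ℝ) < 1/(n+1:ℝ) := by positivity
  have h1 : r + 1/(n+1:ℝ) ∈ Set.Icc (0:ℝ) 1 := ⟨by linarith, hr2⟩
  have h2 : r ∈ Set.Icc (0:ℝ) 1 := ⟨hr, by linarith⟩
  have ht := tendsto_dq hX hm hfin hmaj h2 h1 (by linarith)
  exact ht.liminf_eq

/-- On a point with a metric derivative, `Phi` recovers it. -/
lemma Phi_eq (hX : IsExtPolish X d) {u : ℝ → X} {mh : ℝ → ℝ≥0∞}
    (hm : Measurable mh) (hfin : (∫⁻ r, mh r) < ⊤)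
    (hmaj : ∀ a b : ℝ, 0 ≤ a → a ≤ b → b ≤ 1 → d (u a) (u b) ≤ ∫⁻ r in Set.Icc a b, mh r)
    {r : ℝ} {L : ℝ≥0∞} (hr : r ∈ Set.Ico (0:ℝ) 1)
    (hder : HasMDeriv d u (Set.Icc 0 1) r L) :
    Phi d (u, r) = L := by
  obtain ⟨hr0, hr1⟩ := hr
  have hseq : Tendsto (fun n : ℕ => 1/(n+1:ℝ)) atTop (𝓝 0) := by
    have := tendsto_one_div_add_atTop_nhds_zero_nat (𝕜 := ℝ)
    exact this.congr (fun n => by norm_num)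
  have hev : ∀ᶠ n : ℕ in atTop, r + 1/(n+1:ℝ) ≤ 1 := by
    have h := hseq.eventually_lt_const (sub_pos.mpr hr1)
    filter_upwards [h] with n hn
    linarith
  have hmem : ∀ᶠ n : ℕ in atTop,
      (1/(n+1:ℝ)) ∈ {h : ℝ | h ≠ 0 ∧ r + h ∈ Set.Icc (0:ℝ) 1} := by
    filter_upwards [hev] with n hn
    have hp : (0:ℝ) < 1/(n+1:ℝ) := by positivity
    exact ⟨ne_of_gt hp, ⟨by linarith, hn⟩⟩
  have htt : Tendsto (fun n : ℕ => 1/(n+1:ℝ)) atTop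
      (𝓝[{h : ℝ | h ≠ 0 ∧ r + h ∈ Set.Icc (0:ℝ) 1}] 0) :=
    tendsto_nhdsWithin_iff.mpr ⟨hseq, hmem⟩
  have hQ : Tendsto (fun n : ℕ =>
      d (u (r + 1/(n+1:ℝ))) (u r) / ENNReal.ofReal |1/(n+1:ℝ)|) atTop (𝓝 L) :=
    hder.comp htt
  have heq : ∀ᶠ n : ℕ in atTop,
      PhiN d n (u, r) * ((n : ℝ≥0∞) + 1) =
      d (u (r + 1/(n+1:ℝ))) (u r) / ENNReal.ofReal |1/(n+1:ℝ)| := by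
    filter_upwards [hev] with n hn
    rw [PhiN_eq hX hm hfin hmaj hr0 hn]
    have hp : (0:ℝ) < 1/(n+1:ℝ) := by positivity
    have hshow : ENNReal.ofReal (1/(n+1:ℝ)) = ((n : ℝ≥0∞) + 1)⁻¹ := by
      rw [one_div, ENNReal.ofReal_inv_of_pos (by positivity)]
      congr 1
      rw [ENNReal.ofReal_add (by positivity) zero_le_one, ENNReal.ofReal_natCast,
        ENNReal.ofReal_one]
    rw [hX.symm (u r), abs_of_pos hp, hshow, ENNReal.div_eq_inv_mul, inv_inv, mul_comm]
  unfold Phi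
  rw [liminf_congr heq]
  exact hQ.liminf_eq


lemma shrink_to_point (ν : Measure ℝ) [IsFiniteMeasure ν] {x : ℝ} (hx : ν {x} = 0) :
    Tendsto (fun k : ℕ => ν (Set.Icc (x - 1/(k+1:ℝ)) (x + 1/(k+1:ℝ)))) atTop (𝓝 0) := by
  have hmono : Antitone (fun k : ℕ => Set.Icc (x - 1/(k+1:ℝ)) (x + 1/(k+1:ℝ))) := by
    intro i j hij
    have h1 : 1/(j+1:ℝ) ≤ 1/(i+1:ℝ) := by gcongr
    exact Set.Icc_subset_Icc (by linarith) (by linarith)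
  have hInter : (⋂ k : ℕ, Set.Icc (x - 1/(k+1:ℝ)) (x + 1/(k+1:ℝ))) = {x} := by
    ext y
    simp only [Set.mem_iInter, Set.mem_Icc, Set.mem_singleton_iff]
    constructor
    · intro h
      have h2 : y = x := by
        by_contra hc
        obtain ⟨k, hk⟩ := exists_nat_one_div_lt (abs_pos.mpr (sub_ne_zero.mpr hc))
        have h3 := (h k).1
        have h4 := (h k).2
        have h5 : 1 / ((k:ℝ) + 1) = 1/(k+1:ℝ) := by norm_num
        rw [h5] at hk
        rcases abs_cases (y - x) with ⟨he, _⟩ | ⟨he, _⟩ <;> rw [he] at hk <;> linarith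
      exact h2
    · rintro rfl
      intro k
      have hp : (0:ℝ) < 1/(k+1:ℝ) := by positivity
      exact ⟨by linarith, by linarith⟩
  have htmi := tendsto_measure_iInter_atTop (μ := ν)
    (fun k => measurableSet_Icc.nullMeasurableSet) hmono ⟨0, (measure_ne_top ν _)⟩
  rw [hInter, hx] at htmi
  exact htmi

/-- Fundamental theorem of calculus (lower bound) for `AC` curves, in terms of the
measurable surrogate `Phi` of the metric derivative. -/
lemma ftc_le (hX : IsExtPolish X d) {u : ℝ → X} {mh : ℝ → ℝ≥0∞} (hm : Measurable mh)
    (hfin : (∫⁻ r, mh r) < ⊤)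
    (hmaj : ∀ a b : ℝ, 0 ≤ a → a ≤ b → b ≤ 1 → d (u a) (u b) ≤ ∫⁻ r in Set.Icc a b, mh r)
    {s t : ℝ} (h0 : 0 ≤ s) (hst : s ≤ t) (h1 : t ≤ 1) :
    d (u s) (u t) ≤ ∫⁻ r in Set.Icc s t, Phi d (u, r) := by
  rcases eq_or_lt_of_le hst with rfl | hslt
  · rw [(hX.eq_zero_iff (u s) (u s)).mpr rfl]
    exact zero_le
  set ν := volume.withDensity mh with hν
  have hνIcc : ∀ x y : ℝ, ν (Set.Icc x y) = ∫⁻ r in Set.Icc x y, mh r :=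
    fun x y => withDensity_apply _ measurableSet_Icc
  have hνuniv : ν Set.univ < ⊤ := by
    have h2 : ν Set.univ = ∫⁻ r, mh r := by
      rw [hν, withDensity_apply _ MeasurableSet.univ, Measure.restrict_univ]
    rw [h2]; exact hfin
  haveI : IsFiniteMeasure ν := ⟨hνuniv⟩
  have hbound : ∀ x y : ℝ, 0 ≤ x → x ≤ y → y ≤ 1 → d (u x) (u y) ≤ ν (Set.Icc x y) := by
    intro x y hx hxy hy; rw [hνIcc]; exact hmaj x y hx hxy hy
  have hνatom : ∀ x : ℝ, ν ({x} : Set ℝ) = 0 := fun x =>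
    (withDensity_absolutelyContinuous volume mh) Real.volume_singleton
  have hIccIoc : ∀ x y : ℝ, ν (Set.Icc x y) = ν (Set.Ioc x y) := by
    intro x y
    rcases le_or_gt x y with h | h
    · refine le_antisymm ?_ (measure_mono Set.Ioc_subset_Icc_self)
      calc ν (Set.Icc x y) ≤ ν ({x} ∪ Set.Ioc x y) := by
            refine measure_mono ?_
            intro z hz
            rcases eq_or_lt_of_le hz.1 with hz1 | hz1
            · exact Or.inl hz1.symm
            · exact Or.inr ⟨hz1, hz.2⟩
      _ ≤ ν ({x} : Set ℝ) + ν (Set.Ioc x y) := measure_union_le _ _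
      _ = ν (Set.Ioc x y) := by rw [hνatom, zero_add]
    · rw [Set.Icc_eq_empty (not_le.mpr h), Set.Ioc_eq_empty (not_lt.mpr h.le)]
  -- clamp to [s,t]
  set c0 : ℝ → ℝ := fun r => max s (min t r) with hc0
  have hc0mem : ∀ r, c0 r ∈ Set.Icc s t := fun r =>
    ⟨le_max_left _ _, max_le hst (min_le_left _ _)⟩
  have hc0mono : Monotone c0 := fun x y hxy =>
    max_le_max le_rfl (min_le_min le_rfl hxy)
  have hc0id : ∀ r ∈ Set.Icc s t, c0 r = r := by
    intro r hr
    simp only [hc0]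
    rw [min_eq_right hr.2, max_eq_right hr.1]
  have hc0s : c0 s = s := hc0id s ⟨le_rfl, hst⟩
  have hc0t : c0 t = t := hc0id t ⟨hst, le_rfl⟩
  have hc0lip : ∀ x y : ℝ, |c0 x - c0 y| ≤ |x - y| := by
    intro x y
    simp only [hc0]
    calc |max s (min t x) - max s (min t y)| ≤ |min t x - min t y| := by
          rw [max_comm s (min t x), max_comm s (min t y)]
          exact abs_max_sub_max_le_abs _ _ _
    _ ≤ |x - y| := by
          have h5 := abs_min_sub_min_le_max t x t y
          simp only [sub_self, abs_zero] at h5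
          rwa [max_eq_right (abs_nonneg _)] at h5
  -- the distance function from u s, and its real version
  set phiE : ℝ → ℝ≥0∞ := fun r => d (u s) (u (c0 r)) with hphiE
  have hphiE_fin : ∀ r, phiE r ≠ ⊤ := by
    intro r
    refine ne_top_of_le_ne_top hνuniv.ne ?_
    exact le_trans (hbound s (c0 r) h0 (hc0mem r).1 (le_trans (hc0mem r).2 h1))
      (measure_mono (Set.subset_univ _))
  set phi : ℝ → ℝ := fun r => (phiE r).toReal with hphi
  set A : ℝ → ℝ := fun r => (ν (Set.Ioc s (c0 r))).toReal with hA
  have hAincr : ∀ x y : ℝ, x ≤ y → A y - A x = (ν (Set.Ioc (c0 x) (c0 y))).toReal := by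
    intro x y hxy
    have hu : Set.Ioc s (c0 x) ∪ Set.Ioc (c0 x) (c0 y) = Set.Ioc s (c0 y) :=
      Set.Ioc_union_Ioc_eq_Ioc (hc0mem x).1 (hc0mono hxy)
    have hd2 : Disjoint (Set.Ioc s (c0 x)) (Set.Ioc (c0 x) (c0 y)) := Set.Ioc_disjoint_Ioc_of_le le_rfl
    have hsum : ν (Set.Ioc s (c0 y)) = ν (Set.Ioc s (c0 x)) + ν (Set.Ioc (c0 x) (c0 y)) := by
      rw [← hu, measure_union hd2 measurableSet_Ioc]
    simp only [hA]
    rw [hsum, ENNReal.toReal_add (measure_ne_top ν _) (measure_ne_top ν _)]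
    ring
  have hAmono : Monotone A := by
    intro x y hxy
    have := hAincr x y hxy
    have h2 : (0:ℝ) ≤ (ν (Set.Ioc (c0 x) (c0 y))).toReal := ENNReal.toReal_nonneg
    linarith
  have hphi_lip : ∀ x y : ℝ, x ≤ y → |phi y - phi x| ≤ A y - A x := by
    intro x y hxy
    have hbnd : d (u (c0 x)) (u (c0 y)) ≤ ν (Set.Ioc (c0 x) (c0 y)) := by
      rw [← hIccIoc]
      exact hbound _ _ (le_trans h0 (hc0mem x).1) (hc0mono hxy) (le_trans (hc0mem y).2 h1)
    have hbnd' : d (u (c0 y)) (u (c0 x)) ≤ ν (Set.Ioc (c0 x) (c0 y)) := by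
      rw [hX.symm]; exact hbnd
    have ht1 : phiE y ≤ phiE x + ν (Set.Ioc (c0 x) (c0 y)) :=
      le_trans (hX.triangle _ (u (c0 x)) _) (add_le_add_right hbnd _)
    have ht2 : phiE x ≤ phiE y + ν (Set.Ioc (c0 x) (c0 y)) :=
      le_trans (hX.triangle _ (u (c0 y)) _) (add_le_add_right hbnd' _)
    have hfin2 : ν (Set.Ioc (c0 x) (c0 y)) ≠ ⊤ := measure_ne_top ν _
    have hAxy := hAincr x y hxy
    have t1 : (phiE y).toReal ≤ (phiE x).toReal + (ν (Set.Ioc (c0 x) (c0 y))).toReal := by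
      have h3 := ENNReal.toReal_mono (ENNReal.add_ne_top.mpr ⟨hphiE_fin x, hfin2⟩) ht1
      rwa [ENNReal.toReal_add (hphiE_fin x) hfin2] at h3
    have t2 : (phiE x).toReal ≤ (phiE y).toReal + (ν (Set.Ioc (c0 x) (c0 y))).toReal := by
      have h3 := ENNReal.toReal_mono (ENNReal.add_ne_top.mpr ⟨hphiE_fin y, hfin2⟩) ht2
      rwa [ENNReal.toReal_add (hphiE_fin y) hfin2] at h3
    rw [abs_sub_le_iff, hAxy]
    constructor
    · simp only [hphi]; linarith
    · simp only [hphi]; linarith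
  -- continuity of A
  have hAcont : Continuous A := by
    rw [Metric.continuous_iff]
    intro x0 ε hε
    have hsh := shrink_to_point ν (hνatom (c0 x0))
    have hshr : Tendsto (fun k : ℕ =>
        (ν (Set.Icc (c0 x0 - 1/(k+1:ℝ)) (c0 x0 + 1/(k+1:ℝ)))).toReal) atTop (𝓝 0) := by
      have h2 := (ENNReal.tendsto_toReal (by simp)).comp hsh
      simpa [Function.comp_def] using h2
    obtain ⟨k, hk⟩ := (hshr.eventually_lt_const hε).exists
    refine ⟨1/(k+1:ℝ), by positivity, fun y hy => ?_⟩
    have hdist : dist (A y) (A x0) = |A y - A x0| := Real.dist_eq _ _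
    have habs : |A y - A x0| ≤ (ν (Set.Icc (c0 x0 - 1/(k+1:ℝ)) (c0 x0 + 1/(k+1:ℝ)))).toReal := by
      rcases le_total y x0 with hle | hle
      · have h2 := hAincr y x0 hle
        have h3 : |A y - A x0| = A x0 - A y := by
          rw [abs_sub_comm, abs_of_nonneg (by linarith [hAmono hle])]
        rw [h3, h2]
        refine ENNReal.toReal_mono (measure_ne_top ν _) (measure_mono ?_)
        intro z hz
        have hl1 := hc0lip y x0
        have hd2 : |y - x0| < 1/(k+1:ℝ) := by rw [← Real.dist_eq]; exact hy
        constructor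
        · have : c0 x0 - c0 y ≤ |y - x0| := by
            have := abs_sub_comm (c0 y) (c0 x0)
            have h5 := le_abs_self (c0 x0 - c0 y)
            calc c0 x0 - c0 y ≤ |c0 x0 - c0 y| := h5
            _ = |c0 y - c0 x0| := (abs_sub_comm _ _).symm
            _ ≤ |y - x0| := hl1
          linarith [hz.1]
        · have hp : (0:ℝ) < 1/(k+1:ℝ) := by positivity
          linarith [hz.2]
      · have h2 := hAincr x0 y hle
        have h3 : |A y - A x0| = A y - A x0 := abs_of_nonneg (by linarith [hAmono hle])
        rw [h3, h2]
        refine ENNReal.toReal_mono (measure_ne_top ν _) (measure_mono ?_)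
        intro z hz
        have hl1 := hc0lip y x0
        have hd2 : |y - x0| < 1/(k+1:ℝ) := by rw [← Real.dist_eq]; exact hy
        have hp : (0:ℝ) < 1/(k+1:ℝ) := by positivity
        constructor
        · linarith [hz.1, hc0mono hle]
        · have : c0 y - c0 x0 ≤ |y - x0| := le_trans (le_abs_self _) hl1
          linarith [hz.2]
    rw [hdist]
    exact lt_of_le_of_lt habs hk
  have hphicont : Continuous phi := by
    rw [Metric.continuous_iff]
    intro x0 ε hε
    obtain ⟨δ, hδ, hδ'⟩ := Metric.continuous_iff.mp hAcont x0 ε hε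
    refine ⟨δ, hδ, fun y hy => ?_⟩
    have h2 := hδ' y hy
    rw [Real.dist_eq] at h2 ⊢
    rcases le_total y x0 with hle | hle
    · have h3 := hphi_lip y x0 hle
      have h4 : |A x0 - A y| = A x0 - A y := abs_of_nonneg (by linarith [hAmono hle])
      rw [abs_sub_comm] at h2 ⊢
      rw [h4] at h2
      exact lt_of_le_of_lt h3 h2
    · have h3 := hphi_lip x0 y hle
      have h4 : |A y - A x0| = A y - A x0 := abs_of_nonneg (by linarith [hAmono hle])
      rw [h4] at h2
      exact lt_of_le_of_lt h3 h2
  set B : ℝ → ℝ := fun r => A r - phi r with hB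
  have hBmono : Monotone B := by
    intro x y hxy
    have h2 := hphi_lip x y hxy
    rw [abs_sub_le_iff] at h2
    simp only [hB]
    linarith [h2.1]
  have hBcont : Continuous B := hAcont.sub hphicont
  set SA : StieltjesFunction ℝ := ⟨A, hAmono, fun x => hAcont.continuousAt.continuousWithinAt⟩
    with hSA
  set SB : StieltjesFunction ℝ := ⟨B, hBmono, fun x => hBcont.continuousAt.continuousWithinAt⟩
    with hSB
  have hSAm : SA.measure = ν.restrict (Set.Ioc s t) := by
    refine Measure.ext_of_Ioc _ _ ?_
    intro a b hab
    rw [StieltjesFunction.measure_Ioc, Measure.restrict_apply measurableSet_Ioc]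
    have h2 : (SA : ℝ → ℝ) b - (SA : ℝ → ℝ) a = (ν (Set.Ioc (c0 a) (c0 b))).toReal :=
      hAincr a b hab.le
    have hset : Set.Ioc a b ∩ Set.Ioc s t = Set.Ioc (c0 a) (c0 b) := by
      ext z
      simp only [Set.mem_inter_iff, Set.mem_Ioc, hc0]
      constructor
      · rintro ⟨⟨h3, h4⟩, h5, h6⟩
        refine ⟨max_lt h5 (lt_of_le_of_lt (min_le_right t a) h3), ?_⟩
        rcases le_total (min t b) s with h7 | h7
        · rw [max_eq_left h7]
          exact absurd h5 (not_lt.mpr (le_trans (le_min h6 h4) h7))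
        · rw [max_eq_right h7]
          exact le_min h6 h4
      · rintro ⟨h3, h4⟩
        have hs2 : s < z := lt_of_le_of_lt (le_max_left _ _) h3
        have hminb : z ≤ min t b ∨ z ≤ s := by
          rcases le_total (min t b) s with h7 | h7
          · right; rw [max_eq_left h7] at h4; exact h4
          · left; rw [max_eq_right h7] at h4; exact h4
        have hminb' : z ≤ min t b := by
          rcases hminb with h7 | h7
          · exact h7
          · exact absurd hs2 (not_lt.mpr h7)
        have hzt : z ≤ t := le_trans hminb' (min_le_left _ _)
        have hzb : z ≤ b := le_trans hminb' (min_le_right _ _)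
        have hminta : min t a < z := lt_of_le_of_lt (le_max_right _ _) h3
        have haz : a < z := by
          rcases le_total t a with h7 | h7
          · rw [min_eq_left h7] at hminta
            exact absurd hzt (not_le.mpr hminta)
          · rwa [min_eq_right h7] at hminta
        exact ⟨⟨haz, hzb⟩, hs2, hzt⟩
    rw [h2, hset, ENNReal.ofReal_toReal (measure_ne_top ν _)]
  have hSAd : SA.measure = volume.withDensity ((Set.Ioc s t).indicator mh) := by
    rw [hSAm, hν, restrict_withDensity measurableSet_Ioc, ← withDensity_indicator measurableSet_Ioc]
  have hrnA : SA.measure.rnDeriv volume =ᶠ[ae volume] (Set.Ioc s t).indicator mh := by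
    rw [hSAd]
    exact Measure.rnDeriv_withDensity volume (hm.indicator measurableSet_Ioc)
  have hderA := SA.ae_hasDerivAt
  have hderB := SB.ae_hasDerivAt
  set β : ℝ → ℝ≥0∞ := fun r => SB.measure.rnDeriv volume r with hβ
  have hβmeas : Measurable β := Measure.measurable_rnDeriv _ _
  -- a.e. pointwise lower bound on Phi
  have hae : ∀ᵐ r : ℝ, r ∈ Set.Ioo s t →
      ENNReal.ofReal ((mh r).toReal - (β r).toReal) ≤ Phi d (u, r) := by
    filter_upwards [hderA, hderB, hrnA] with r hA' hB' hr' hrIoo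
    have hApt : HasDerivAt A ((mh r).toReal) r := by
      have h2 : (SA.measure.rnDeriv volume r).toReal = ((Set.Ioc s t).indicator mh r).toReal := by
        rw [hr']
      rw [h2, Set.indicator_of_mem (show r ∈ Set.Ioc s t from ⟨hrIoo.1, hrIoo.2.le⟩)] at hA'
      exact hA'
    have hphid : HasDerivAt phi ((mh r).toReal - (β r).toReal) r := by
      have h2 : phi = fun z => A z - B z := by
        funext z; simp only [hB]; ring
      rw [h2]
      exact hApt.sub hB'
    have hseq0 : Tendsto (fun n : ℕ => 1/(n+1:ℝ)) atTop (𝓝 0) := by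
      have := tendsto_one_div_add_atTop_nhds_zero_nat (𝕜 := ℝ)
      exact this.congr (fun n => by norm_num)
    have hseq : Tendsto (fun n : ℕ => r + 1/(n+1:ℝ)) atTop (𝓝[≠] r) := by
      rw [tendsto_nhdsWithin_iff]
      constructor
      · have h2 : Tendsto (fun n : ℕ => r + 1/(n+1:ℝ)) atTop (𝓝 (r + 0)) :=
          tendsto_const_nhds.add hseq0
        simpa using h2
      · refine Filter.Eventually.of_forall fun n => ?_
        have hp : (0:ℝ) < 1/(n+1:ℝ) := by positivity
        simp only [Set.mem_compl_iff, Set.mem_singleton_iff]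
        intro hcon
        nlinarith [hcon]
    have hslope : Tendsto (fun n : ℕ => (phi (r + 1/(n+1:ℝ)) - phi r) * ((n:ℝ)+1)) atTop
        (𝓝 ((mh r).toReal - (β r).toReal)) := by
      have h2 := (hasDerivAt_iff_tendsto_slope.mp hphid).comp hseq
      refine h2.congr fun n => ?_
      have hp : (0:ℝ) < 1/(n+1:ℝ) := by positivity
      simp only [Function.comp_apply, slope_def_field]
      rw [div_eq_mul_inv]
      have h3 : r + 1/(n+1:ℝ) - r = 1/(n+1:ℝ) := by ring
      rw [h3]
      rw [one_div, inv_inv]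
    have hofR : Tendsto (fun n : ℕ =>
        ENNReal.ofReal ((phi (r + 1/(n+1:ℝ)) - phi r) * ((n:ℝ)+1))) atTop
        (𝓝 (ENNReal.ofReal ((mh r).toReal - (β r).toReal))) :=
      (ENNReal.continuous_ofReal.tendsto _).comp hslope
    have hseqle : ∀ᶠ n : ℕ in atTop,
        ENNReal.ofReal ((phi (r + 1/(n+1:ℝ)) - phi r) * ((n:ℝ)+1)) ≤
          PhiN d n (u, r) * ((n : ℝ≥0∞) + 1) := by
      have hev : ∀ᶠ n : ℕ in atTop, r + 1/(n+1:ℝ) ≤ t := by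
        have h2 := hseq0.eventually_lt_const (sub_pos.mpr hrIoo.2)
        filter_upwards [h2] with n hn
        linarith
      filter_upwards [hev] with n hn
      have hp : (0:ℝ) < 1/(n+1:ℝ) := by positivity
      have hr01 : (0:ℝ) ≤ r := le_trans h0 hrIoo.1.le
      have hrn1 : r + 1/(n+1:ℝ) ≤ 1 := le_trans hn h1
      rw [PhiN_eq hX hm hfin hmaj hr01 hrn1]
      rcases le_or_gt (phi (r + 1/(n+1:ℝ)) - phi r) 0 with hneg | hpos
      · rw [ENNReal.ofReal_eq_zero.mpr (mul_nonpos_iff.mpr (Or.inr ⟨hneg, by positivity⟩))]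
        exact zero_le
      · have hc1 : c0 r = r := hc0id r ⟨hrIoo.1.le, hrIoo.2.le⟩
        have hc2 : c0 (r + 1/(n+1:ℝ)) = r + 1/(n+1:ℝ) := hc0id _ ⟨by linarith [hrIoo.1], hn⟩
        have h2 : phiE (r + 1/(n+1:ℝ)) ≤ phiE r + d (u r) (u (r + 1/(n+1:ℝ))) := by
          simp only [hphiE, hc1, hc2]
          exact hX.triangle _ (u r) _
        have h3 : ENNReal.ofReal (phi (r + 1/(n+1:ℝ)) - phi r) ≤ d (u r) (u (r + 1/(n+1:ℝ))) := by
          simp only [hphi]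
          rw [ENNReal.ofReal_sub _ ENNReal.toReal_nonneg, ENNReal.ofReal_toReal (hphiE_fin _),
            ENNReal.ofReal_toReal (hphiE_fin _)]
          exact tsub_le_iff_left.mpr h2
        have h4 : ENNReal.ofReal ((phi (r + 1/(n+1:ℝ)) - phi r) * ((n:ℝ)+1)) =
            ENNReal.ofReal (phi (r + 1/(n+1:ℝ)) - phi r) * ((n : ℝ≥0∞) + 1) := by
          rw [ENNReal.ofReal_mul hpos.le]
          congr 1
          rw [ENNReal.ofReal_add (by positivity) zero_le_one, ENNReal.ofReal_natCast,
            ENNReal.ofReal_one]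
        rw [h4]
        exact mul_le_mul_left h3 _
    have hliminf : ENNReal.ofReal ((mh r).toReal - (β r).toReal) =
        liminf (fun n : ℕ =>
          ENNReal.ofReal ((phi (r + 1/(n+1:ℝ)) - phi r) * ((n:ℝ)+1))) atTop :=
      (hofR.liminf_eq).symm
    rw [hliminf]
    exact liminf_le_liminf hseqle
  -- integral comparison
  haveI : SigmaFinite SB.measure := by infer_instance
  have hstep1 : ∫⁻ r in Set.Icc s t, ENNReal.ofReal ((mh r).toReal - (β r).toReal) ≤
      ∫⁻ r in Set.Icc s t, Phi d (u, r) := by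
    refine lintegral_mono_ae ?_
    have h2 : ∀ᵐ r ∂(volume.restrict (Set.Icc s t)), r ∈ Set.Ioo s t := by
      have h3 : volume ({s, t} : Set ℝ) = 0 :=
        ((Set.finite_singleton t).insert s).measure_zero volume
      have h4 : ∀ᵐ r : ℝ ∂volume, r ∉ ({s, t} : Set ℝ) := compl_mem_ae_iff.mpr h3
      filter_upwards [ae_restrict_of_ae h4, ae_restrict_mem measurableSet_Icc] with r hr1 hr2
      simp only [Set.mem_insert_iff, Set.mem_singleton_iff, not_or] at hr1
      exact ⟨lt_of_le_of_ne hr2.1 (Ne.symm hr1.1), lt_of_le_of_ne hr2.2 hr1.2⟩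
    filter_upwards [ae_restrict_of_ae hae, h2] with r hr1 hr2
    exact hr1 hr2
  have hβle : ∫⁻ r in Set.Icc s t, β r ≤ SB.measure (Set.Icc s t) := by
    have h2 := Measure.withDensity_rnDeriv_le SB.measure volume
    calc ∫⁻ r in Set.Icc s t, β r = (volume.withDensity β) (Set.Icc s t) :=
          (withDensity_apply _ measurableSet_Icc).symm
    _ ≤ SB.measure (Set.Icc s t) := h2 _
  have hmhae : ∀ᵐ r : ℝ, mh r < ⊤ := ae_lt_top hm hfin.ne
  have hβae : ∀ᵐ r : ℝ, β r < ⊤ := Measure.rnDeriv_lt_top _ _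
  have hptwise : ∀ᵐ r : ℝ, mh r - β r ≤ ENNReal.ofReal ((mh r).toReal - (β r).toReal) := by
    filter_upwards [hmhae, hβae] with r h2 h3
    rcases le_total (β r) (mh r) with h4 | h4
    · rw [ENNReal.ofReal_sub _ ENNReal.toReal_nonneg, ENNReal.ofReal_toReal h2.ne,
        ENNReal.ofReal_toReal h3.ne]
    · rw [tsub_eq_zero_of_le h4]
      exact zero_le
  have hstep2 : ν (Set.Icc s t) - SB.measure (Set.Icc s t) ≤
      ∫⁻ r in Set.Icc s t, ENNReal.ofReal ((mh r).toReal - (β r).toReal) := by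
    calc ν (Set.Icc s t) - SB.measure (Set.Icc s t)
        ≤ (∫⁻ r in Set.Icc s t, mh r) - ∫⁻ r in Set.Icc s t, β r := by
          refine tsub_le_tsub ?_ hβle
          rw [hνIcc]
    _ ≤ ∫⁻ r in Set.Icc s t, (mh r - β r) := lintegral_sub_le _ _ hβmeas
    _ ≤ ∫⁻ r in Set.Icc s t, ENNReal.ofReal ((mh r).toReal - (β r).toReal) :=
          lintegral_mono_ae (ae_restrict_of_ae hptwise)
  -- final arithmetic
  have hdfin : d (u s) (u t) ≤ ν (Set.Ioc s t) := by
    rw [← hIccIoc]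
    exact hbound s t h0 hst h1
  have hdne : d (u s) (u t) ≠ ⊤ := ne_top_of_le_ne_top (measure_ne_top ν _) hdfin
  have hBs : B s = 0 := by
    simp only [hB, hA, hphi, hphiE, hc0s]
    rw [Set.Ioc_self, (hX.eq_zero_iff (u s) (u s)).mpr rfl]
    simp
  have hBval : SB.measure (Set.Icc s t) = ν (Set.Ioc s t) - d (u s) (u t) := by
    rw [StieltjesFunction.measure_Icc]
    have hll : Function.leftLim (SB : ℝ → ℝ) s = B s := by
      refine leftLim_eq_of_tendsto ?_
      · exact (hBcont.tendsto s).mono_left nhdsWithin_le_nhds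
    rw [hll, hBs, sub_zero]
    have hBt : B t = (ν (Set.Ioc s t)).toReal - (d (u s) (u t)).toReal := by
      simp only [hB, hA, hphi, hphiE, hc0t]
    show ENNReal.ofReal (B t) = _
    rw [hBt, ENNReal.ofReal_sub _ ENNReal.toReal_nonneg, ENNReal.ofReal_toReal (measure_ne_top ν _),
      ENNReal.ofReal_toReal hdne]
  calc d (u s) (u t) = ν (Set.Ioc s t) - (ν (Set.Ioc s t) - d (u s) (u t)) :=
        (ENNReal.sub_sub_cancel (measure_ne_top ν _) hdfin).symm
  _ = ν (Set.Icc s t) - SB.measure (Set.Icc s t) := by rw [hIccIoc, hBval]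
  _ ≤ ∫⁻ r in Set.Icc s t, ENNReal.ofReal ((mh r).toReal - (β r).toReal) := hstep2
  _ ≤ ∫⁻ r in Set.Icc s t, Phi d (u, r) := hstep1

end FTC

/-! ### Main theorem -/

/-- Theorem 4.2, first part: for a constant speed geodesic `μ` in
`(P(X), W_ψ)` represented by `η`, every plan `(e_s, e_t)_# η` is optimal. -/
theorem plans_optimal_of_geodesic {X : Type*} [TopologicalSpace X] [PolishSpace X]
    [MeasurableSpace X] [BorelSpace X]
    (d : X → X → ℝ≥0∞) (hX : IsExtPolish X d)
    (ψ : ℝ≥0∞ → ℝ≥0∞) (hψ : IsOrlicz ψ) (hsl : Superlinear ψ) (hfl : FlatAtZero ψ)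
    (μ : ℝ → Measure X) (hprob : ∀ t, IsProbabilityMeasure (μ t))
    (hgeo : ∀ s ∈ Icc (0 : ℝ) 1, ∀ t ∈ Icc (0 : ℝ) 1,
      Wass ψ d (μ s) (μ t) = ENNReal.ofReal |s - t| * Wass ψ d (μ 0) (μ 1))
    (η : Measure (ℝ → X)) (hη : IsProbabilityMeasure η)
    (hAC : ∀ᵐ u ∂η, IsACpsi ψ d 0 1 u)
    (hmap : ∀ t ∈ Icc (0 : ℝ) 1, η.map (fun u => u t) = μ t)
    (D : (ℝ → X) → ℝ → ℝ≥0∞)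
    (hD : ∀ᵐ t ∂(volume.restrict (Icc (0 : ℝ) 1)),
      (∀ᵐ u ∂η, HasMDeriv d u (Icc (0 : ℝ) 1) t (D u t)) ∧
      (∀ L : ℝ≥0∞, HasMDeriv (Wass ψ d) μ (Icc (0 : ℝ) 1) t L →
        L = luxNorm ψ η (fun u => D u t))) :
    ∀ s ∈ Icc (0 : ℝ) 1, ∀ t ∈ Icc (0 : ℝ) 1,
      luxNorm ψ (η.map fun u => (u s, u t)) (fun p : X × X => d p.1 p.2) =
        Wass ψ d (μ s) (μ t) := by
  intro s hs t ht
  haveI := hη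
  set W01 := Wass ψ d (μ 0) (μ 1) with hW01
  have hd : Measurable (fun p : X × X => d p.1 p.2) := hX.lsc.measurable
  have hmapeq : ∀ s' t' : ℝ,
      luxNorm ψ (η.map fun u => (u s', u t')) (fun p : X × X => d p.1 p.2) =
        luxNorm ψ η (fun u => d (u s') (u t')) := by
    intro s' t'
    unfold luxNorm
    congr 1
    refine Set.ext fun l => ?_
    simp only [Set.mem_setOf_eq]
    have hF : Measurable (fun u : ℝ → X => (u s', u t')) :=
      (measurable_pi_apply s').prodMk (measurable_pi_apply t')
    have hmeas : Measurable fun p : X × X => ψ (d p.1 p.2 / l) :=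
      hψ.measurable.comp (hd.div_const l)
    rw [lintegral_map hmeas hF]
  have hlow : ∀ s' ∈ Icc (0:ℝ) 1, ∀ t' ∈ Icc (0:ℝ) 1, Wass ψ d (μ s') (μ t') ≤
      luxNorm ψ (η.map fun u => (u s', u t')) (fun p : X × X => d p.1 p.2) := by
    intro s' hs' t' ht'
    have hF : Measurable (fun u : ℝ → X => (u s', u t')) :=
      (measurable_pi_apply s').prodMk (measurable_pi_apply t')
    have hcoup : (η.map fun u => (u s', u t')) ∈ Couplings (μ s') (μ t') := by
      refine ⟨Measure.isProbabilityMeasure_map hF.aemeasurable, ?_, ?_⟩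
      · rw [Measure.map_map measurable_fst hF]
        exact hmap s' hs'
      · rw [Measure.map_map measurable_snd hF]
        exact hmap t' ht'
    exact iInf₂_le _ hcoup
  have haeT : ∀ᵐ r ∂(volume.restrict (Icc (0:ℝ) 1)),
      (∀ᵐ u ∂η, HasMDeriv d u (Icc (0:ℝ) 1) r (D u r)) ∧
      W01 = luxNorm ψ η (fun u => D u r) := by
    filter_upwards [hD, ae_restrict_mem measurableSet_Icc] with r hr1 hr2
    refine ⟨hr1.1, hr1.2 W01 ?_⟩
    unfold HasMDeriv
    refine Filter.Tendsto.congr' ?_ tendsto_const_nhds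
    refine eventually_nhdsWithin_of_forall fun h hh => ?_
    obtain ⟨hh0, hhI⟩ := hh
    show W01 = Wass ψ d (μ (r + h)) (μ r) / ENNReal.ofReal |h|
    rw [hgeo (r + h) hhI r hr2]
    have he : r + h - r = h := by ring
    rw [he]
    have hne : ENNReal.ofReal |h| ≠ 0 := by
      simp only [ne_eq, ENNReal.ofReal_eq_zero, not_le]
      exact abs_pos.mpr hh0
    have hnetop : ENNReal.ofReal |h| ≠ ⊤ := ENNReal.ofReal_ne_top
    rw [div_eq_mul_inv, mul_comm (ENNReal.ofReal |h|) W01, mul_assoc,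
      ENNReal.mul_inv_cancel hne hnetop, mul_one]
  have key : ∀ s' t' : ℝ, s' ∈ Icc (0:ℝ) 1 → t' ∈ Icc (0:ℝ) 1 → s' < t' →
      luxNorm ψ η (fun u => d (u s') (u t')) ≤ ENNReal.ofReal (t' - s') * W01 := by
    intro s' t' hs' ht' hlt
    set T := ENNReal.ofReal (t' - s') with hT
    have hT0 : T ≠ 0 := by
      simp only [hT, ne_eq, ENNReal.ofReal_eq_zero, not_le]
      linarith
    have hTtop : T ≠ ⊤ := ENNReal.ofReal_ne_top
    have hT1 : T ≤ 1 := by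
      rw [hT, ← ENNReal.ofReal_one]
      exact ENNReal.ofReal_le_ofReal (by linarith [hs'.1, ht'.2])
    have hcore : ∀ c : ℝ≥0∞, W01 < c → c ≠ ⊤ →
        luxNorm ψ η (fun u => d (u s') (u t')) ≤ T * c := by
      intro c hc hctop
      have hc0 : c ≠ 0 := ((zero_le (a := W01)).trans_lt hc).ne'
      set νP : Measure ℝ := T⁻¹ • volume.restrict (Icc s' t') with hνP
      haveI hνPP : IsProbabilityMeasure νP := by
        constructor
        have huniv : νP Set.univ = T⁻¹ * T := by
          rw [hνP, Measure.smul_apply, Measure.restrict_apply_univ, Real.volume_Icc, ← hT]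
          rfl
        rw [huniv]
        exact ENNReal.inv_mul_cancel hT0 hTtop
      refine luxNorm_le (ENNReal.mul_pos hT0 hc0) ?_
      have hchain : ∀ᵐ u ∂η, ψ (d (u s') (u t') / (T * c)) ≤
          ∫⁻ r, ψ (Phi d (u, r) * c⁻¹) ∂νP := by
        filter_upwards [hAC] with u hu
        obtain ⟨mh, hmh, hmfin, hmaj⟩ := exists_measurable_majorant hψ hsl hu
        have hftc := ftc_le hX hmh hmfin hmaj hs'.1 hlt.le ht'.2
        have hPhiSec : Measurable (fun r => Phi d (u, r)) :=
          (measurable_Phi hd).comp measurable_prodMk_left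
        have hint : ∫⁻ r, (Phi d (u, r) * c⁻¹) ∂νP =
            (∫⁻ r in Icc s' t', Phi d (u, r)) * c⁻¹ * T⁻¹ := by
          rw [hνP, lintegral_smul_measure, lintegral_mul_const _ hPhiSec]
          show T⁻¹ * ((∫⁻ r in Icc s' t', Phi d (u, r)) * c⁻¹) = _
          ring
        have hle1 : d (u s') (u t') / (T * c) ≤ ∫⁻ r, (Phi d (u, r) * c⁻¹) ∂νP := by
          rw [hint, div_eq_mul_inv, ENNReal.mul_inv (Or.inl hT0) (Or.inl hTtop)]
          calc d (u s') (u t') * (T⁻¹ * c⁻¹)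
              ≤ (∫⁻ r in Icc s' t', Phi d (u, r)) * (T⁻¹ * c⁻¹) := mul_le_mul_left hftc _
          _ = (∫⁻ r in Icc s' t', Phi d (u, r)) * c⁻¹ * T⁻¹ := by ring
        calc ψ (d (u s') (u t') / (T * c)) ≤ ψ (∫⁻ r, (Phi d (u, r) * c⁻¹) ∂νP) :=
              hψ.mono hle1
        _ ≤ ∫⁻ r, ψ (Phi d (u, r) * c⁻¹) ∂νP := hψ.jensen νP (hPhiSec.mul_const _)
      have hswap : ∫⁻ u, (∫⁻ r, ψ (Phi d (u, r) * c⁻¹) ∂νP) ∂η =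
          ∫⁻ r, (∫⁻ u, ψ (Phi d (u, r) * c⁻¹) ∂η) ∂νP := by
        refine lintegral_lintegral_swap ?_
        exact (hψ.measurable.comp
          (((measurable_Phi hd).comp (measurable_fst.prodMk measurable_snd)).mul_const
            _)).aemeasurable
      have hνPac : νP ≪ volume.restrict (Icc (0:ℝ) 1) := by
        refine Measure.AbsolutelyContinuous.mk fun S hSm hS0 => ?_
        rw [Measure.restrict_apply' measurableSet_Icc] at hS0
        rw [hνP, Measure.smul_apply, Measure.restrict_apply' measurableSet_Icc]
        have h2 : volume (S ∩ Icc s' t') = 0 :=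
          measure_mono_null (Set.inter_subset_inter_right S (Set.Icc_subset_Icc hs'.1 ht'.2)) hS0
        rw [h2, smul_zero]
      have haer : ∀ᵐ r ∂νP, ∫⁻ u, ψ (Phi d (u, r) * c⁻¹) ∂η ≤ 1 := by
        have h1 := hνPac.ae_le haeT
        have h2 : ∀ᵐ r ∂νP, r ∈ Icc s' t' := by
          rw [hνP]
          exact Measure.ae_smul_measure (ae_restrict_mem measurableSet_Icc) _
        have h3 : ∀ᵐ r ∂νP, r ≠ 1 := by
          have hz : νP ({(1:ℝ)} : Set ℝ) = 0 := by
            rw [hνP, Measure.smul_apply, Measure.restrict_apply' measurableSet_Icc,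
              measure_mono_null Set.inter_subset_left Real.volume_singleton, smul_zero]
          have h4 : ∀ᵐ r ∂νP, r ∉ ({(1:ℝ)} : Set ℝ) := compl_mem_ae_iff.mpr hz
          filter_upwards [h4] with r hr
          simpa using hr
        filter_upwards [h1, h2, h3] with r hr1 hr2 hr3
        obtain ⟨hrd, hrlux⟩ := hr1
        have hPhiD : ∀ᵐ u ∂η, Phi d (u, r) = D u r := by
          filter_upwards [hrd, hAC] with u hu1 hu2
          obtain ⟨mh, hmh, hmfin, hmaj⟩ := exists_measurable_majorant hψ hsl hu2
          refine Phi_eq hX hmh hmfin hmaj ⟨le_trans hs'.1 hr2.1, ?_⟩ hu1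
          exact lt_of_le_of_ne (le_trans hr2.2 ht'.2) hr3
        have hcong : ∫⁻ u, ψ (Phi d (u, r) * c⁻¹) ∂η = ∫⁻ u, ψ (D u r / c) ∂η := by
          refine lintegral_congr_ae ?_
          filter_upwards [hPhiD] with u hu
          rw [hu, div_eq_mul_inv]
        rw [hcong]
        refine modular_le_of_lt_luxNorm hψ ?_
        rw [← hrlux]
        exact hc
      calc ∫⁻ u, ψ (d (u s') (u t') / (T * c)) ∂η
          ≤ ∫⁻ u, (∫⁻ r, ψ (Phi d (u, r) * c⁻¹) ∂νP) ∂η := lintegral_mono_ae hchain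
      _ = ∫⁻ r, (∫⁻ u, ψ (Phi d (u, r) * c⁻¹) ∂η) ∂νP := hswap
      _ ≤ ∫⁻ r, 1 ∂νP := lintegral_mono_ae haer
      _ = 1 := by rw [lintegral_one, measure_univ]
    rcases eq_or_ne W01 ⊤ with htop | hWne
    · rw [htop, ENNReal.mul_top hT0]
      exact le_top
    · refine ENNReal.le_of_forall_pos_le_add fun ε hε hfin2 => ?_
      have hcε := hcore (W01 + ε)
        (ENNReal.lt_add_right hWne (by exact_mod_cast hε.ne'))
        (ENNReal.add_ne_top.mpr ⟨hWne, ENNReal.coe_ne_top⟩)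
      refine le_trans hcε ?_
      rw [mul_add]
      refine add_le_add_right ?_ _
      calc T * (ε : ℝ≥0∞) ≤ 1 * ε := mul_le_mul_left hT1 _
      _ = ε := one_mul _
  have main_le : ∀ s' t' : ℝ, s' ∈ Icc (0:ℝ) 1 → t' ∈ Icc (0:ℝ) 1 → s' < t' →
      luxNorm ψ (η.map fun u => (u s', u t')) (fun p : X × X => d p.1 p.2) =
        Wass ψ d (μ s') (μ t') := by
    intro s' t' hs' ht' hlt
    refine le_antisymm ?_ (hlow s' hs' t' ht')
    rw [hmapeq]
    have hk := key s' t' hs' ht' hlt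
    rw [hgeo s' hs' t' ht']
    rwa [abs_of_nonpos (by linarith), neg_sub]
  rcases lt_trichotomy s t with hlt | heq | hgt
  · exact main_le s t hs ht hlt
  · subst heq
    have hzero : (fun u : ℝ → X => d (u s) (u s)) = fun _ => (0:ℝ≥0∞) := by
      funext u
      exact (hX.eq_zero_iff _ _).mpr rfl
    rw [hmapeq, hzero, luxNorm_zero_fun hψ, hgeo s hs s hs]
    simp
  · have h1 := main_le t s ht hs hgt
    rw [hmapeq] at h1 ⊢
    have h2 : (fun u : ℝ → X => d (u s) (u t)) = fun u => d (u t) (u s) := by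
      funext u
      exact hX.symm _ _
    rw [h2, h1, hgeo t ht s hs, hgeo s hs t ht, abs_sub_comm]
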